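/- Let G₁ and G₂ be finite simple graphs, each with at least one vertex, such that at least one of them has no isolated vertices. Then for any finite simple graph H, ξ((G₁ + G₂)⊙H) = n(G₁) + n(G₂), where G₁ + G₂ denotes the join of G₁ and G₂. -/

import Mathlib

universe u v

variable {V : Type u} {W : Type v}

/-- A distance-equalizer set of a graph: for every pair of distinct vertices outside `S`
there is a vertex of `S` equidistant to both. -/
def IsDistEqSet {α : Type*} (G : SimpleGraph α) (S : Set α) : Prop :=
  ∀ ⦃x y : α⦄, x ∉ S → y ∉ S → x ≠ y → ∃ w ∈ S, G.dist w x = G.dist w y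

/-- The equidistant dimension of a graph: the minimum cardinality of a distance-equalizer set. -/
noncomputable def eqdim {α : Type*} (G : SimpleGraph α) : ℕ :=
  sInf {n | ∃ S : Set α, IsDistEqSet G S ∧ S.ncard = n}

/-- The bisector of two vertices: vertices equidistant to both. -/
def bisector {α : Type*} (G : SimpleGraph α) (x y : α) : Set α :=
  {w | G.dist w x = G.dist w y}

/-- The empty bisector graph of `G`: two distinct vertices are adjacent iff their bisector
in `G` is empty. -/
def emptyBisector {α : Type*} (G : SimpleGraph α) : SimpleGraph α where
  Adj x y := x ≠ y ∧ bisector G x y = ∅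
  symm := by
    refine ⟨?_⟩
    rintro x y ⟨h1, h2⟩
    refine ⟨h1.symm, Set.eq_empty_iff_forall_notMem.mpr fun w hw => ?_⟩
    exact Set.eq_empty_iff_forall_notMem.mp h2 w
      ((show G.dist w y = G.dist w x from hw).symm)
  loopless := ⟨fun _ h => h.1 rfl⟩

/-- A vertex cover of a graph: a set of vertices meeting every edge. -/
def IsVertexCover {α : Type*} (G : SimpleGraph α) (C : Set α) : Prop :=
  ∀ ⦃x y : α⦄, G.Adj x y → x ∈ C ∨ y ∈ C

/-- An independent set of a graph: a set of pairwise non-adjacent vertices. -/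
def IsIndepSet {α : Type*} (G : SimpleGraph α) (A : Set α) : Prop :=
  ∀ ⦃x y : α⦄, x ∈ A → y ∈ A → ¬ G.Adj x y

/-- The vertex cover number `β(G)`. -/
noncomputable def vcNum {α : Type*} (G : SimpleGraph α) : ℕ :=
  sInf {n | ∃ C : Set α, IsVertexCover G C ∧ C.ncard = n}

/-- The independence number `α(G)`. -/
noncomputable def indepNum {α : Type*} (G : SimpleGraph α) : ℕ :=
  sSup {n | ∃ A : Set α, IsIndepSet G A ∧ A.ncard = n}

/-- A forward-equalized pair `(X, Y)` of `G`: `X ∪ Y = V(G)` and for every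
`a ∈ X \ Y` and `b ∈ Y \ X` there is `w` with `d(w,a) = d(w,b) + 1`. -/
def IsForwardEqualizedPair {α : Type*} (G : SimpleGraph α) (X Y : Set α) : Prop :=
  X ∪ Y = Set.univ ∧
  ∀ ⦃a⦄, a ∈ X \ Y → ∀ ⦃b⦄, b ∈ Y \ X → ∃ w, G.dist w a = G.dist w b + 1

/-- `β*(G)`: the minimum of `|X ∩ Y|` over all pairs of vertex covers `X, Y` of the
empty bisector graph of `G` such that `(X, Y)` is a forward-equalized pair of `G`. -/
noncomputable def betaStar {α : Type*} (G : SimpleGraph α) : ℕ :=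
  sInf {n | ∃ X Y : Set α,
    IsVertexCover (emptyBisector G) X ∧ IsVertexCover (emptyBisector G) Y ∧
    IsForwardEqualizedPair G X Y ∧ (X ∩ Y).ncard = n}

/-- The corona product `G ⊙ H`: one copy of `H` for each vertex `i` of `G` (the vertices
`Sum.inr (i, w)`), with `i` joined to every vertex of its copy. -/
def corona (G : SimpleGraph V) (H : SimpleGraph W) : SimpleGraph (V ⊕ V × W) where
  Adj x y :=
    match x, y with
    | Sum.inl a, Sum.inl b => G.Adj a b
    | Sum.inl a, Sum.inr p => a = p.1
    | Sum.inr p, Sum.inl a => a = p.1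
    | Sum.inr p, Sum.inr q => p.1 = q.1 ∧ H.Adj p.2 q.2
  symm := by
    refine ⟨?_⟩
    rintro (a | p) (b | q) h
    · exact h.symm
    · exact h
    · exact h
    · exact ⟨h.1.symm, h.2.symm⟩
  loopless := by
    refine ⟨?_⟩
    rintro (a | p) h
    · exact G.loopless.irrefl a h
    · exact H.loopless.irrefl p.2 h.2
/-- The join `G₁ + G₂` of two graphs: disjoint union together with all edges between the
two vertex sets. -/
def joinGraph {V₁ : Type u} {V₂ : Type v} (G₁ : SimpleGraph V₁) (G₂ : SimpleGraph V₂) :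
    SimpleGraph (V₁ ⊕ V₂) where
  Adj x y :=
    match x, y with
    | Sum.inl a, Sum.inl b => G₁.Adj a b
    | Sum.inr a, Sum.inr b => G₂.Adj a b
    | Sum.inl _, Sum.inr _ => True
    | Sum.inr _, Sum.inl _ => True
  symm := by
    refine ⟨?_⟩
    rintro (a | a) (b | b) h
    · exact h.symm
    · trivial
    · trivial
    · exact h.symm
  loopless := by
    refine ⟨?_⟩
    rintro (a | a) h
    · exact G₁.loopless.irrefl a h
    · exact G₂.loopless.irrefl a h

section Aux
set_option linter.unusedSectionVars false

open SimpleGraph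

variable {V₁ : Type u} {V₂ : Type u} {W : Type v}
variable [Nonempty V₁] [Nonempty V₂] [Nonempty W]
variable {G₁ : SimpleGraph V₁} {G₂ : SimpleGraph V₂} {H : SimpleGraph W}

private lemma corona_connected : (corona (joinGraph G₁ G₂) H).Connected := by
  rw [SimpleGraph.connected_iff]
  refine ⟨?_, ⟨Sum.inl (Sum.inl (Classical.arbitrary V₁))⟩⟩
  have adjJ : ∀ i j : V₁ ⊕ V₂, (joinGraph G₁ G₂).Adj i j →
      (corona (joinGraph G₁ G₂) H).Adj (Sum.inl i) (Sum.inl j) := fun _ _ h => h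
  have base : ∀ i j : V₁ ⊕ V₂,
      (corona (joinGraph G₁ G₂) H).Reachable (Sum.inl i) (Sum.inl j) := by
    have cross₁ : ∀ (a : V₁) (b : V₂), (joinGraph G₁ G₂).Adj (Sum.inl a) (Sum.inr b) := by
      intro a b; show True; trivial
    have cross₂ : ∀ (b : V₂) (a : V₁), (joinGraph G₁ G₂).Adj (Sum.inr b) (Sum.inl a) := by
      intro a b; show True; trivial
    rintro (a | a) (b | b)
    · exact ((adjJ _ _ (cross₁ a (Classical.arbitrary V₂))).reachable).trans
        ((adjJ _ _ (cross₂ (Classical.arbitrary V₂) b)).reachable)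
    · exact (adjJ _ _ (cross₁ a b)).reachable
    · exact (adjJ _ _ (cross₂ a b)).reachable
    · exact ((adjJ _ _ (cross₂ a (Classical.arbitrary V₁))).reachable).trans
        ((adjJ _ _ (cross₁ (Classical.arbitrary V₁) b)).reachable)
  have toBase : ∀ x : (V₁ ⊕ V₂) ⊕ (V₁ ⊕ V₂) × W,
      ∃ i, (corona (joinGraph G₁ G₂) H).Reachable x (Sum.inl i) := by
    rintro (i | p)
    · exact ⟨i, SimpleGraph.Reachable.refl _⟩
    · exact ⟨p.1, SimpleGraph.Adj.reachable (show p.1 = p.1 from rfl)⟩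
  intro x y
  obtain ⟨i, hi⟩ := toBase x
  obtain ⟨j, hj⟩ := toBase y
  exact (hi.trans (base i j)).trans hj.symm

private lemma corona_dist_one (i : V₁ ⊕ V₂) (w : W) :
    (corona (joinGraph G₁ G₂) H).dist (Sum.inl i) (Sum.inr (i, w)) = 1 :=
  SimpleGraph.dist_eq_one_iff_adj.mpr rfl

private lemma corona_dist_two {a i : V₁ ⊕ V₂} (h : (joinGraph G₁ G₂).Adj a i) (w : W) :
    (corona (joinGraph G₁ G₂) H).dist (Sum.inl a) (Sum.inr (i, w)) = 2 := by
  have h1 : (corona (joinGraph G₁ G₂) H).Adj (Sum.inl a) (Sum.inl i) := h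
  have h2 : (corona (joinGraph G₁ G₂) H).Adj (Sum.inl i) (Sum.inr (i, w)) := rfl
  have hle : (corona (joinGraph G₁ G₂) H).dist (Sum.inl a) (Sum.inr (i, w)) ≤ 2 := by
    have := SimpleGraph.dist_le
      (SimpleGraph.Walk.cons h1 (SimpleGraph.Walk.cons h2 SimpleGraph.Walk.nil))
    simpa using this
  have hne0 : (corona (joinGraph G₁ G₂) H).dist (Sum.inl a) (Sum.inr (i, w)) ≠ 0 :=
    Nat.pos_iff_ne_zero.mp (corona_connected.pos_dist_of_ne (by simp))
  have hne1 : (corona (joinGraph G₁ G₂) H).dist (Sum.inl a) (Sum.inr (i, w)) ≠ 1 := by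
    exact fun heq => h.ne (SimpleGraph.dist_eq_one_iff_adj.mp heq)
  omega

private lemma corona_walk_length (i : V₁ ⊕ V₂) (w : W) :
    ∀ {s z : (V₁ ⊕ V₂) ⊕ (V₁ ⊕ V₂) × W}
      (p : (corona (joinGraph G₁ G₂) H).Walk s z), z = Sum.inr (i, w) →
      (∀ x : W, s ≠ Sum.inr (i, x)) → s ≠ Sum.inl i →
      (corona (joinGraph G₁ G₂) H).dist s (Sum.inl i) + 1 ≤ p.length := by
  intro s z p
  induction p with
  | nil => rintro rfl h1 _; exact absurd rfl (h1 w)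
  | @cons s t _ hadj q ih =>
    rintro rfl h1 h2
    have ih : (∀ x : W, t ≠ Sum.inr (i, x)) → t ≠ Sum.inl i →
        (corona (joinGraph G₁ G₂) H).dist t (Sum.inl i) + 1 ≤ q.length := ih rfl
    rw [SimpleGraph.Walk.length_cons]
    rcases t with j | ⟨j, x⟩
    · by_cases hji : j = i
      · subst hji
        have hd : (corona (joinGraph G₁ G₂) H).dist s (Sum.inl j) ≤ 1 := by
          have := SimpleGraph.dist_le (SimpleGraph.Walk.cons hadj SimpleGraph.Walk.nil)
          simpa using this
        have hq : q.length ≠ 0 := fun h0 =>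
          (by simp : (Sum.inl j : (V₁ ⊕ V₂) ⊕ (V₁ ⊕ V₂) × W) ≠ Sum.inr (j, w))
            (SimpleGraph.Walk.eq_of_length_eq_zero h0)
        omega
      · have hih := ih (by simp) (by simp [hji])
        have htri : (corona (joinGraph G₁ G₂) H).dist s (Sum.inl i) ≤
            1 + (corona (joinGraph G₁ G₂) H).dist (Sum.inl j) (Sum.inl i) := by
          have h1' : (corona (joinGraph G₁ G₂) H).dist s (Sum.inl j) ≤ 1 := by
            have := SimpleGraph.dist_le (SimpleGraph.Walk.cons hadj SimpleGraph.Walk.nil)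
            simpa using this
          have := corona_connected.dist_triangle (G := corona (joinGraph G₁ G₂) H)
            (u := s) (v := Sum.inl j) (w := Sum.inl i)
          omega
        omega
    · by_cases hji : j = i
      · subst hji
        exfalso
        rcases s with a | p'
        · exact h2 (by rw [show a = j from hadj])
        · exact h1 p'.2 (by
            have hj : p'.1 = j := hadj.1
            rw [← hj])
      · have hih := ih (fun y hy => hji (congrArg Prod.fst (Sum.inr_injective hy)))
          (by simp)
        have htri : (corona (joinGraph G₁ G₂) H).dist s (Sum.inl i) ≤
            1 + (corona (joinGraph G₁ G₂) H).dist (Sum.inr (j, x)) (Sum.inl i) := by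
          have h1' : (corona (joinGraph G₁ G₂) H).dist s (Sum.inr (j, x)) ≤ 1 := by
            have := SimpleGraph.dist_le (SimpleGraph.Walk.cons hadj SimpleGraph.Walk.nil)
            simpa using this
          have := corona_connected.dist_triangle (G := corona (joinGraph G₁ G₂) H)
            (u := s) (v := Sum.inr (j, x)) (w := Sum.inl i)
          omega
        omega

private lemma corona_dist_succ (i : V₁ ⊕ V₂) (w : W)
    {s : (V₁ ⊕ V₂) ⊕ (V₁ ⊕ V₂) × W}
    (h1 : ∀ x : W, s ≠ Sum.inr (i, x)) (h2 : s ≠ Sum.inl i) :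
    (corona (joinGraph G₁ G₂) H).dist s (Sum.inr (i, w)) =
      (corona (joinGraph G₁ G₂) H).dist s (Sum.inl i) + 1 := by
  have hc : (corona (joinGraph G₁ G₂) H).Connected := corona_connected
  obtain ⟨p, hp⟩ := hc.exists_walk_length_eq_dist s (Sum.inr (i, w))
  have hge := corona_walk_length i w p rfl h1 h2
  have hle : (corona (joinGraph G₁ G₂) H).dist s (Sum.inr (i, w)) ≤
      (corona (joinGraph G₁ G₂) H).dist s (Sum.inl i) + 1 := by
    have htri := hc.dist_triangle (u := s) (v := Sum.inl i) (w := Sum.inr (i, w))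
    have := corona_dist_one (G₁ := G₁) (G₂ := G₂) (H := H) i w
    omega
  omega

end Aux

/-- If at least one of `G₁`, `G₂` has no isolated vertices, then
`ξ((G₁ + G₂) ⊙ H) = n(G₁) + n(G₂)`. -/
theorem eqdim_join_corona {V₁ : Type u} {V₂ : Type u} {W : Type v}
    [Fintype V₁] [Fintype V₂] [Nonempty V₁] [Nonempty V₂] [Fintype W] [Nonempty W]
    (G₁ : SimpleGraph V₁) (G₂ : SimpleGraph V₂)
    (hiso : (∀ a : V₁, ∃ b : V₁, G₁.Adj a b) ∨ (∀ a : V₂, ∃ b : V₂, G₂.Adj a b))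
    (H : SimpleGraph W) :
    eqdim (corona (joinGraph G₁ G₂) H) = Fintype.card V₁ + Fintype.card V₂ := by
    classical
  unfold eqdim
  set n := Fintype.card V₁ + Fintype.card V₂ with hn
  have hmem : n ∈ {m | ∃ S : Set ((V₁ ⊕ V₂) ⊕ (V₁ ⊕ V₂) × W),
      IsDistEqSet (corona (joinGraph G₁ G₂) H) S ∧ S.ncard = m} := by
    refine ⟨Set.range Sum.inl, ?_, ?_⟩
    · rintro x y hx hy hxy
      obtain ⟨⟨i, w⟩, rfl⟩ : ∃ p, x = Sum.inr p := by
        rcases x with a | p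
        · exact absurd ⟨a, rfl⟩ hx
        · exact ⟨p, rfl⟩
      obtain ⟨⟨j, w'⟩, rfl⟩ : ∃ p, y = Sum.inr p := by
        rcases y with a | p
        · exact absurd ⟨a, rfl⟩ hy
        · exact ⟨p, rfl⟩
      by_cases hij : i = j
      · subst hij
        exact ⟨Sum.inl i, ⟨i, rfl⟩, by rw [corona_dist_one, corona_dist_one]⟩
      · have hcn : ∃ a : V₁ ⊕ V₂,
            (joinGraph G₁ G₂).Adj a i ∧ (joinGraph G₁ G₂).Adj a j := by
          rcases i with a | a <;> rcases j with b | b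
          · exact ⟨Sum.inr (Classical.arbitrary V₂), trivial, trivial⟩
          · rcases hiso with hd | hd
            · obtain ⟨a', ha'⟩ := hd a
              exact ⟨Sum.inl a', ha'.symm, trivial⟩
            · obtain ⟨b', hb'⟩ := hd b
              exact ⟨Sum.inr b', trivial, hb'.symm⟩
          · rcases hiso with hd | hd
            · obtain ⟨b', hb'⟩ := hd b
              exact ⟨Sum.inl b', trivial, hb'.symm⟩
            · obtain ⟨a', ha'⟩ := hd a
              exact ⟨Sum.inr a', ha'.symm, trivial⟩
          · exact ⟨Sum.inl (Classical.arbitrary V₁), trivial, trivial⟩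
        obtain ⟨a, ha1, ha2⟩ := hcn
        exact ⟨Sum.inl a, ⟨a, rfl⟩, by rw [corona_dist_two ha1, corona_dist_two ha2]⟩
    · rw [← Nat.card_coe_set_eq, Nat.card_range_of_injective Sum.inl_injective,
        Nat.card_eq_fintype_card, Fintype.card_sum]
  have hlb : ∀ m ∈ {m | ∃ S : Set ((V₁ ⊕ V₂) ⊕ (V₁ ⊕ V₂) × W),
      IsDistEqSet (corona (joinGraph G₁ G₂) H) S ∧ S.ncard = m}, n ≤ m := by
    rintro m ⟨S, hS, rfl⟩
    have hmeet : ∀ i : V₁ ⊕ V₂, ∃ s, s ∈ S ∧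
        (s = Sum.inl i ∨ ∃ x, s = Sum.inr (i, x)) := by
      intro i
      by_contra hcon
      push_neg at hcon
      have hi : (Sum.inl i : (V₁ ⊕ V₂) ⊕ (V₁ ⊕ V₂) × W) ∉ S :=
        fun h => (hcon _ h).1 rfl
      obtain ⟨w⟩ := ‹Nonempty W›
      have hw : (Sum.inr (i, w) : (V₁ ⊕ V₂) ⊕ (V₁ ⊕ V₂) × W) ∉ S :=
        fun h => (hcon _ h).2 w rfl
      obtain ⟨s, hsS, hsd⟩ := hS hi hw (by simp)
      have h1 : ∀ x : W, s ≠ Sum.inr (i, x) := fun x => (hcon s hsS).2 x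
      have h2 : s ≠ Sum.inl i := (hcon s hsS).1
      rw [corona_dist_succ i w h1 h2] at hsd
      omega
    choose f hfS hf using hmeet
    have hinj : Function.Injective f := by
      intro i j hij
      rcases hf i with h1 | ⟨x, h1⟩ <;> rcases hf j with h2 | ⟨y, h2⟩ <;>
        have h := h1.symm.trans (hij.trans h2)
      · exact Sum.inl_injective h
      · exact absurd h (by simp)
      · exact absurd h (by simp)
      · exact congrArg Prod.fst (Sum.inr_injective h)
    have hsub : Function.Injective (fun i : V₁ ⊕ V₂ => (⟨f i, hfS i⟩ : S)) :=
      fun i j h => hinj (congrArg Subtype.val h)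
    have hcard := Nat.card_le_card_of_injective _ hsub
    rw [Nat.card_eq_fintype_card, Fintype.card_sum, Nat.card_coe_set_eq] at hcard
    exact hcard
  exact le_antisymm (Nat.sInf_le hmem) (le_csInf ⟨n, hmem⟩ hlb)
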